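/- Let X be an I-continuous T0 space such that ↟_I x ∈ σ_I for every x ∈ X. Then: (a) for every net (x_i) in X and every y ∈ X, the net (x_i) I-converges to y if and only if for every U ∈ σ_I with y ∈ U, x_i ∈ U eventually; and (b) a subset U of X is τ_I-open (i.e., every net that I-converges to a point of U is eventually in U) if and only if U is a union of members of σ_I. -/

import Mathlib

universe u

/-- The specialisation order of a topological space: `x ≤ y` iff `x ∈ closure {y}`. -/
def sle {X : Type u} [TopologicalSpace X] (x y : X) : Prop :=
  x ∈ closure ({y} : Set X)

/-- Upper bounds with respect to the specialisation order. -/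
def sUB {X : Type u} [TopologicalSpace X] (A : Set X) : Set X :=
  {u | ∀ a ∈ A, sle a u}

/-- `s` is the least upper bound of `A` with respect to the specialisation order. -/
def sIsLUB {X : Type u} [TopologicalSpace X] (A : Set X) (s : X) : Prop :=
  s ∈ sUB A ∧ ∀ u ∈ sUB A, sle s u

/-- `x ≪_I y`: for every irreducible set `E` having a supremum above `y`,
some element of `E` is above `x`. -/
def IBelow {X : Type u} [TopologicalSpace X] (x y : X) : Prop :=
  ∀ E : Set X, IsIrreducible E → ∀ s : X, sIsLUB E s → sle y s → ∃ e ∈ E, sle x e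

/-- `X` is I-continuous: for every `y`, the set `↡_I y` is irreducible with
least upper bound `y`. -/
def IContinuous (X : Type u) [TopologicalSpace X] : Prop :=
  ∀ y : X, IsIrreducible {x | IBelow x y} ∧ sIsLUB {x | IBelow x y} y

/-- `X` is I-stable: `↟_I U` is open for every open `U`. -/
def IStable (X : Type u) [TopologicalSpace X] : Prop :=
  ∀ U : Set X, IsOpen U → IsOpen {x : X | ∃ a ∈ U, IBelow a x}

/-- `X` is sup-sober: every closed irreducible set with a supremum is the closure
of that supremum. -/
def SupSober (X : Type u) [TopologicalSpace X] : Prop :=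
  ∀ F : Set X, IsClosed F → IsIrreducible F → ∀ s : X, sIsLUB F s → F = closure ({s} : Set X)

/-- The collection σ_I: upper sets (w.r.t. specialisation) inaccessible by suprema of
irreducible sets. -/
def sigmaI (X : Type u) [TopologicalSpace X] : Set (Set X) :=
  {U | (∀ a ∈ U, ∀ b : X, sle a b → b ∈ U) ∧
       ∀ E : Set X, IsIrreducible E → ∀ s : X, sIsLUB E s → s ∈ U → (U ∩ E).Nonempty}

/-- The irreducibly derived topology τ_SI: open sets inaccessible by suprema of
irreducible sets. -/
def tauSI (X : Type u) [TopologicalSpace X] : Set (Set X) :=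
  {U | IsOpen U ∧ ∀ E : Set X, IsIrreducible E → ∀ s : X, sIsLUB E s → s ∈ U → (E ∩ U).Nonempty}

/-- The net `x` I-converges to `y`: there is an irreducible set `E` with a supremum above `y`,
all of whose elements are eventual lower bounds of the net. -/
def IConv {X : Type u} [TopologicalSpace X] {ι : Type u} [Preorder ι]
    (x : ι → X) (y : X) : Prop :=
  ∃ E : Set X, IsIrreducible E ∧
    (∀ e ∈ E, ∃ i₀ : ι, ∀ i : ι, i₀ ≤ i → sle e (x i)) ∧
    ∃ s : X, sIsLUB E s ∧ sle y s

/-- `D` is directed with respect to the specialisation order. -/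
def sDirectedOn {X : Type u} [TopologicalSpace X] (D : Set X) : Prop :=
  ∀ a ∈ D, ∀ b ∈ D, ∃ c ∈ D, sle a c ∧ sle b c

/-- Way-below in the specialisation poset, via nonempty directed sets. -/
def sWayBelow {X : Type u} [TopologicalSpace X] (x y : X) : Prop :=
  ∀ D : Set X, D.Nonempty → sDirectedOn D → ∀ s : X, sIsLUB D s → sle y s → ∃ d ∈ D, sle x d

/-- `X` is a DI space: the supremum of any irreducible set is also attained as the supremum
of a nonempty directed subset of its lower closure. -/
def DISpace (X : Type u) [TopologicalSpace X] : Prop :=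
  ∀ E : Set X, IsIrreducible E → ∀ s : X, sIsLUB E s →
    ∃ D : Set X, D.Nonempty ∧ sDirectedOn D ∧ (∀ d ∈ D, ∃ e ∈ E, sle d e) ∧ sIsLUB D s

/-- `U` is τ_I-open: every net that I-converges to a point of `U` is eventually in `U`. -/
def TauIOpen {X : Type u} [TopologicalSpace X] (U : Set X) : Prop :=
  ∀ (ι : Type u) [Preorder ι] [Nonempty ι],
    (∀ i j : ι, ∃ k : ι, i ≤ k ∧ j ≤ k) →
    ∀ x : ι → X, ∀ y ∈ U, IConv x y →
    ∃ i₀ : ι, ∀ i : ι, i₀ ≤ i → x i ∈ U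

lemma sle_refl' {X : Type u} [TopologicalSpace X] (x : X) : sle x x :=
  subset_closure rfl

lemma sle_trans' {X : Type u} [TopologicalSpace X] {a b c : X}
    (h1 : sle a b) (h2 : sle b c) : sle a c := by
  have : closure ({b} : Set X) ⊆ closure {c} :=
    closure_minimal (Set.singleton_subset_iff.2 h2) isClosed_closure
  exact this h1

lemma ibelow_sle {X : Type u} [TopologicalSpace X] {x y : X} (h : IBelow x y) : sle x y := by
  have hlub : sIsLUB ({y} : Set X) y :=
    ⟨fun a ha => ha ▸ sle_refl' a, fun u hu => hu y rfl⟩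
  obtain ⟨e, he, hxe⟩ := h {y} isIrreducible_singleton y hlub (sle_refl' y)
  cases he
  exact hxe

lemma sigmaI_aux {X : Type u} [TopologicalSpace X] {V E : Set X}
    (hV : V ∈ sigmaI X) (hE : IsIrreducible E) {s : X} (hs : sIsLUB E s) (hsV : s ∈ V)
    (hsub : E ⊆ closure (E ∩ Vᶜ)) : False := by
  set E' := E ∩ Vᶜ with hE'
  have hclE : closure E' = closure E :=
    subset_antisymm (closure_mono Set.inter_subset_left)
      (closure_minimal (hsub.trans subset_rfl) isClosed_closure)
  have hE'irr : IsIrreducible E' := by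
    rw [← isIrreducible_iff_closure, hclE, isIrreducible_iff_closure]
    exact hE
  have hlub' : sIsLUB E' s := by
    refine ⟨fun a ha => hs.1 a ha.1, fun u hu => hs.2 u fun a ha => ?_⟩
    have h1 : E' ⊆ closure ({u} : Set X) := fun a' ha' => hu a' ha'
    have h2 : closure E' ⊆ closure ({u} : Set X) := closure_minimal h1 isClosed_closure
    exact h2 (hsub ha)
  obtain ⟨e, heV, heE'⟩ := hV.2 E' hE'irr s hlub' hsV
  exact heE'.2 heV

lemma sigmaI_inter {X : Type u} [TopologicalSpace X] {V W : Set X}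
    (hV : V ∈ sigmaI X) (hW : W ∈ sigmaI X) : V ∩ W ∈ sigmaI X := by
  constructor
  · intro a ha b hab
    exact ⟨hV.1 a ha.1 b hab, hW.1 a ha.2 b hab⟩
  · intro E hE s hs hsVW
    by_contra h
    have hVW : ∀ e ∈ E, e ∉ V ∩ W := fun e he hev => h ⟨e, hev, he⟩
    have hcov : E ⊆ closure (E ∩ Vᶜ) ∪ closure (E ∩ Wᶜ) := by
      intro e he
      by_cases hv : e ∈ V
      · have hw : e ∉ W := fun hw => hVW e he ⟨hv, hw⟩
        exact Or.inr (subset_closure ⟨he, hw⟩)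
      · exact Or.inl (subset_closure ⟨he, hv⟩)
    have hone : E ⊆ closure (E ∩ Vᶜ) ∨ E ⊆ closure (E ∩ Wᶜ) := by
      by_contra hno
      push_neg at hno
      obtain ⟨⟨e1, he1, he1'⟩, ⟨e2, he2, he2'⟩⟩ :
          (∃ e ∈ E, e ∉ closure (E ∩ Vᶜ)) ∧ ∃ e ∈ E, e ∉ closure (E ∩ Wᶜ) := by
        constructor
        · obtain ⟨e, he, he'⟩ := Set.not_subset.mp hno.1; exact ⟨e, he, he'⟩
        · obtain ⟨e, he, he'⟩ := Set.not_subset.mp hno.2; exact ⟨e, he, he'⟩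
      obtain ⟨z, hz⟩ := hE.2 (closure (E ∩ Vᶜ))ᶜ (closure (E ∩ Wᶜ))ᶜ
        isClosed_closure.isOpen_compl isClosed_closure.isOpen_compl
        ⟨e1, he1, he1'⟩ ⟨e2, he2, he2'⟩
      rcases hcov hz.1 with hc | hc
      · exact hz.2.1 hc
      · exact hz.2.2 hc
    rcases hone with hc | hc
    · exact sigmaI_aux hV hE hs hsVW.1 hc
    · exact sigmaI_aux hW hE hs hsVW.2 hc

lemma sigmaI_univ {X : Type u} [TopologicalSpace X] : (Set.univ : Set X) ∈ sigmaI X :=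
  ⟨fun _ _ _ _ => trivial, fun E hE _ _ _ => by
    obtain ⟨e, he⟩ := hE.1; exact ⟨e, trivial, he⟩⟩

lemma sigmaI_sInter {X : Type u} [TopologicalSpace X] {𝒜 : Set (Set X)}
    (hfin : 𝒜.Finite) (h𝒜 : ∀ V ∈ 𝒜, V ∈ sigmaI X) : ⋂₀ 𝒜 ∈ sigmaI X := by
  revert h𝒜
  refine Set.Finite.induction_on (motive := fun A _ => (∀ V ∈ A, V ∈ sigmaI X) → ⋂₀ A ∈ sigmaI X)
    _ hfin (fun _ => by rw [Set.sInter_empty]; exact sigmaI_univ) ?_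
  intro V 𝒜' _ _ ih h𝒜
  rw [Set.sInter_insert]
  exact sigmaI_inter (h𝒜 V (Set.mem_insert _ _))
    (ih fun W hW => h𝒜 W (Set.mem_insert_of_mem _ hW))

/-- If `X` is I-continuous with `↟_I x ∈ σ_I` for all `x`, then (a) I-convergence coincides
with eventual membership in all σ_I-sets containing the limit, and (b) the τ_I-open sets
are exactly the unions of members of σ_I. -/
theorem stmt16 {X : Type u} [TopologicalSpace X] [T0Space X]
    (hcont : IContinuous X)
    (hsig : ∀ x : X, {z : X | IBelow x z} ∈ sigmaI X) :
    (∀ (ι : Type u) [Preorder ι] [Nonempty ι],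
      (∀ i j : ι, ∃ k : ι, i ≤ k ∧ j ≤ k) →
      ∀ (x : ι → X) (y : X),
        IConv x y ↔
          ∀ U ∈ sigmaI X, y ∈ U → ∃ i₀ : ι, ∀ i : ι, i₀ ≤ i → x i ∈ U) ∧
    (∀ U : Set X, TauIOpen U ↔ ∃ S ⊆ sigmaI X, U = ⋃₀ S) := by
  constructor
  · intro ι _ _ hdir x y
    constructor
    · rintro ⟨E, hEirr, hlb, s, hsup, hys⟩ U hU hyU
      obtain ⟨e, heU, heE⟩ := hU.2 E hEirr s hsup (hU.1 y hyU s hys)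
      obtain ⟨i₀, hi₀⟩ := hlb e heE
      exact ⟨i₀, fun i hi => hU.1 e heU (x i) (hi₀ i hi)⟩
    · intro h
      refine ⟨{a | IBelow a y}, (hcont y).1, ?_, y, (hcont y).2, sle_refl' y⟩
      intro e he
      obtain ⟨i₀, hi₀⟩ := h {z | IBelow e z} (hsig e) he
      exact ⟨i₀, fun i hi => ibelow_sle (hi₀ i hi)⟩
  · intro U
    constructor
    · intro hU
      refine ⟨{V | V ∈ sigmaI X ∧ V ⊆ U}, fun V hV => hV.1, ?_⟩
      apply subset_antisymm
      · intro y hy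
        -- universal net indexed by finite families of σ_I-neighbourhoods of y
        let ι : Type u := {p : Set (Set X) × X //
          p.1.Finite ∧ (∀ V ∈ p.1, V ∈ sigmaI X ∧ y ∈ V) ∧ p.2 ∈ ⋂₀ p.1}
        letI : Preorder ι :=
          { le := fun p q => p.val.1 ⊆ q.val.1,
            le_refl := fun p => subset_rfl,
            le_trans := fun a b c h1 h2 => Set.Subset.trans h1 h2 }
        haveI : Nonempty ι :=
          ⟨⟨(∅, y), Set.finite_empty, fun V hV => absurd hV (Set.notMem_empty V),
            by rw [Set.sInter_empty]; trivial⟩⟩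
        have hdir : ∀ i j : ι, ∃ k : ι, i ≤ k ∧ j ≤ k := by
          intro p q
          refine ⟨⟨(p.val.1 ∪ q.val.1, y), p.prop.1.union q.prop.1, ?_, ?_⟩,
            Set.subset_union_left, Set.subset_union_right⟩
          · intro V hV
            rcases hV with hV | hV
            · exact p.prop.2.1 V hV
            · exact q.prop.2.1 V hV
          · intro V hV
            rcases hV with hV | hV
            · exact (p.prop.2.1 V hV).2
            · exact (q.prop.2.1 V hV).2
        have hconv : IConv (fun p : ι => p.val.2) y := by
          refine ⟨{a | IBelow a y}, (hcont y).1, ?_, y, (hcont y).2, sle_refl' y⟩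
          intro e he
          refine ⟨⟨({{z | IBelow e z}}, y), Set.finite_singleton _, ?_, ?_⟩, ?_⟩
          · intro V hV
            rw [Set.mem_singleton_iff] at hV
            subst hV
            exact ⟨hsig e, he⟩
          · intro V hV
            rw [Set.mem_singleton_iff] at hV
            subst hV
            exact he
          · intro q hq
            have h1 : {z | IBelow e z} ∈ q.val.1 := hq (Set.mem_singleton _)
            have h2 : IBelow e q.val.2 := q.prop.2.2 _ h1
            exact ibelow_sle h2
        obtain ⟨i₀, hi₀⟩ := hU ι hdir (fun p : ι => p.val.2) y hy hconv
        have hsub : ⋂₀ i₀.val.1 ⊆ U := by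
          intro z hz
          exact hi₀ ⟨(i₀.val.1, z), i₀.prop.1, i₀.prop.2.1, hz⟩ (show i₀.val.1 ⊆ i₀.val.1 from subset_rfl)
        have hmem : ⋂₀ i₀.val.1 ∈ sigmaI X :=
          sigmaI_sInter i₀.prop.1 fun V hV => (i₀.prop.2.1 V hV).1
        have hymem : y ∈ ⋂₀ i₀.val.1 := fun V hV => (i₀.prop.2.1 V hV).2
        exact ⟨⋂₀ i₀.val.1, ⟨hmem, hsub⟩, hymem⟩
      · rintro z ⟨V, hV, hzV⟩
        exact hV.2 hzV
    · rintro ⟨S, hS, rfl⟩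
      intro ι _ _ hdir x y hy hconv
      obtain ⟨V, hVS, hyV⟩ := hy
      obtain ⟨E, hEirr, hlb, s, hsup, hys⟩ := hconv
      have hV := hS hVS
      obtain ⟨e, heV, heE⟩ := hV.2 E hEirr s hsup (hV.1 y hyV s hys)
      obtain ⟨i₀, hi₀⟩ := hlb e heE
      exact ⟨i₀, fun i hi => ⟨V, hVS, hV.1 e heV (x i) (hi₀ i hi)⟩⟩
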